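/- Let Γ be a positive monoid and A a Γ-graded algebra. Then every maximal graded left ideal of A is a maximal left ideal of A in the ungraded sense. -/

import Mathlib

/-- Over a positive monoid, every maximal graded left ideal of a graded algebra
is a maximal left ideal in the ungraded sense. -/
theorem stmt1 {K : Type*} [Field K] {Γ : Type*} [AddMonoid Γ] [DecidableEq Γ]
    {A : Type*} [Ring A] [Algebra K A] (𝒜 : Γ → Submodule K A) [GradedAlgebra 𝒜]
    (hpos : ∀ γ₁ γ₂ : Γ, γ₁ + γ₂ = 0 → γ₁ = 0 ∧ γ₂ = 0)
    (m : Ideal A) (hgr : m.IsHomogeneous 𝒜)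
    (hproper : m ≠ ⊤)
    (hmax : ∀ I : Ideal A, I.IsHomogeneous 𝒜 → m < I → I = ⊤) :
    m.IsMaximal := by
  -- a general fact: for homogeneous b of degree γ ≠ 0, the degree-0 part of r * b is 0
  have hzero : ∀ (γ : Γ), γ ≠ 0 → ∀ b ∈ 𝒜 γ, ∀ r : A,
      (DirectSum.decompose 𝒜 (r * b) 0 : A) = 0 := by
    intro γ hγ b hb r
    induction r using DirectSum.Decomposition.inductionOn 𝒜 with
    | zero => simp
    | homogeneous x =>
      rename_i δ
      have hx : (x : A) * b ∈ 𝒜 (δ + γ) := SetLike.mul_mem_graded x.2 hb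
      exact DirectSum.decompose_of_mem_ne 𝒜 hx (fun h => hγ (hpos δ γ h).2)
    | add u v hu hv =>
      rw [add_mul, DirectSum.decompose_add, DirectSum.add_apply, Submodule.coe_add, hu, hv,
        add_zero]
  -- key: every homogeneous element of nonzero degree lies in m
  have key : ∀ (γ : Γ), γ ≠ 0 → ∀ b ∈ 𝒜 γ, b ∈ m := by
    intro γ hγ b hb
    by_contra hbm
    have hspan : (Ideal.span {b}).IsHomogeneous 𝒜 :=
      Ideal.homogeneous_span 𝒜 {b} (by rintro x rfl; exact ⟨γ, hb⟩)
    have hJ : m ⊔ Ideal.span {b} = ⊤ := by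
      refine hmax _ (hgr.sup hspan) (lt_of_le_of_ne le_sup_left (fun h => hbm ?_))
      rw [h]
      exact Submodule.mem_sup_right (Ideal.subset_span rfl)
    have h1 : (1 : A) ∈ m ⊔ Ideal.span {b} := hJ ▸ Submodule.mem_top
    obtain ⟨x, hx, y, hy, hxy⟩ := Submodule.mem_sup.mp h1
    obtain ⟨r, rfl⟩ := Ideal.mem_span_singleton'.mp hy
    have h2 : (DirectSum.decompose 𝒜 (x + r * b) 0 : A) = 1 := by
      rw [hxy]
      exact DirectSum.decompose_of_mem_same 𝒜 (SetLike.one_mem_graded 𝒜)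
    rw [DirectSum.decompose_add, DirectSum.add_apply, Submodule.coe_add,
      hzero γ hγ b hb r, add_zero] at h2
    exact hproper (Ideal.eq_top_iff_one m |>.mpr (h2 ▸ hgr 0 hx))
  refine ⟨⟨hproper, fun I hI => ?_⟩⟩
  obtain ⟨a, haI, ham⟩ := SetLike.exists_of_lt hI
  classical
  set c : Γ → A := fun i => (DirectSum.decompose 𝒜 a i : A) with hc
  have hsum : ∑ i ∈ (DirectSum.decompose 𝒜 a).support, c i = a :=
    DirectSum.sum_support_decompose 𝒜 a
  have hcm : ∀ i : Γ, i ≠ 0 → c i ∈ m := fun i hi =>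
    key i hi _ (SetLike.coe_mem _)
  -- the degree-0 component of a is not in m
  have hc0m : c 0 ∉ m := by
    intro h0
    apply ham
    rw [← hsum]
    refine Ideal.sum_mem m fun i _ => ?_
    by_cases hi : i = 0
    · rwa [hi]
    · exact hcm i hi
  -- the degree-0 component of a is in I
  have hsub : a - c 0 ∈ m := by
    rw [← DirectSum.sum_support_decompose 𝒜 (a - c 0)]
    refine Ideal.sum_mem m fun i _ => ?_
    by_cases hi : i = 0
    · subst hi
      have h2 : (DirectSum.decompose 𝒜 (a - c 0) 0 : A) = 0 := by
        rw [DirectSum.decompose_sub, DirectSum.sub_apply, Submodule.coe_sub,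
          DirectSum.decompose_of_mem_same 𝒜 (SetLike.coe_mem ((DirectSum.decompose 𝒜 a) 0)),
          sub_self]
      rw [h2]; exact zero_mem m
    · exact key i hi _ (SetLike.coe_mem _)
  have hc0I : c 0 ∈ I := by
    have := Ideal.sub_mem I haI (hI.le hsub)
    simpa using this
  have hspan0 : (Ideal.span {c 0}).IsHomogeneous 𝒜 :=
    Ideal.homogeneous_span 𝒜 {c 0} (by rintro x rfl; exact ⟨0, SetLike.coe_mem _⟩)
  have hJ : m ⊔ Ideal.span {c 0} = ⊤ := by
    refine hmax _ (hgr.sup hspan0) (lt_of_le_of_ne le_sup_left (fun h => hc0m ?_))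
    rw [h]
    exact Submodule.mem_sup_right (Ideal.subset_span rfl)
  have : m ⊔ Ideal.span {c 0} ≤ I :=
    sup_le hI.le ((Ideal.span_singleton_le_iff_mem I).mpr hc0I)
  rw [hJ] at this
  exact top_le_iff.mp this
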